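/- Let I₁, I₂ be finite subsets of D = [0,1] × [0,∞] and let c ∈ [0,∞]. Define Ψ_A(I₁,I₂,c) = I₁ ∪ {(p₂, c₂ + c) : (p₂,c₂) ∈ I₂}. Then PF(Ψ_A(I₁,I₂,c)) = PF(Ψ_A(PF(I₁),I₂,c)) = PF(Ψ_A(I₁,PF(I₂),c)). -/

import Mathlib

open scoped ENNReal

/-- `D = [0,1] × [0,∞]`: probability–cost pairs, costs in the extended nonnegative
reals.  We encode it as the pairs `(p, c) : ℝ≥0∞ × ℝ≥0∞` with `p ≤ 1`. -/
def Dom : Set (ℝ≥0∞ × ℝ≥0∞) := {d | d.1 ≤ 1}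

/-- `(p,c) ⊑ (p',c')` iff `p ≥ p'` and `c ≤ c'`. -/
def sqle (d d' : ℝ≥0∞ × ℝ≥0∞) : Prop := d'.1 ≤ d.1 ∧ d.2 ≤ d'.2

/-- `d ⊏ d'` iff `d ⊑ d'` and `d ≠ d'`. -/
def slt (d d' : ℝ≥0∞ × ℝ≥0∞) : Prop := sqle d d' ∧ d ≠ d'

/-- The Pareto front `PF(I) = {d ∈ I : ∀ d' ∈ I, ¬(d' ⊏ d)}`. -/
def PF (I : Set (ℝ≥0∞ × ℝ≥0∞)) : Set (ℝ≥0∞ × ℝ≥0∞) :=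
  {d ∈ I | ∀ d' ∈ I, ¬ slt d' d}

/-- `Ψ_A(I₁,I₂,c) = I₁ ∪ {(p₂, c₂ + c) : (p₂,c₂) ∈ I₂}`. -/
def PsiA (I₁ I₂ : Set (ℝ≥0∞ × ℝ≥0∞)) (c : ℝ≥0∞) : Set (ℝ≥0∞ × ℝ≥0∞) :=
  I₁ ∪ {d | ∃ d₂ ∈ I₂, d = (d₂.1, d₂.2 + c)}

lemma sqle_refl (d : ℝ≥0∞ × ℝ≥0∞) : sqle d d := ⟨le_rfl, le_rfl⟩

lemma sqle_trans {a b c : ℝ≥0∞ × ℝ≥0∞} (h : sqle a b) (h' : sqle b c) : sqle a c :=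
  ⟨h'.1.trans h.1, h.2.trans h'.2⟩

lemma sqle_antisymm {a b : ℝ≥0∞ × ℝ≥0∞} (h : sqle a b) (h' : sqle b a) : a = b :=
  Prod.ext (le_antisymm h'.1 h.1) (le_antisymm h.2 h'.2)

/-- Embedding of `sqle` into a partial order. -/
def emb (d : ℝ≥0∞ × ℝ≥0∞) : ℝ≥0∞ᵒᵈ × ℝ≥0∞ := (OrderDual.toDual d.1, d.2)

lemma emb_inj : Function.Injective emb := by
  intro a b h
  simp only [emb, Prod.mk.injEq] at h
  exact Prod.ext h.1 h.2

lemma emb_le {a b : ℝ≥0∞ × ℝ≥0∞} : emb a ≤ emb b ↔ sqle a b := by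
  constructor
  · rintro ⟨h1, h2⟩; exact ⟨h1, h2⟩
  · rintro ⟨h1, h2⟩; exact ⟨h1, h2⟩

/-- Every element of a finite set is dominated by a Pareto-front element. -/
lemma exists_pf_dom {I : Set (ℝ≥0∞ × ℝ≥0∞)} (hI : I.Finite) {d : ℝ≥0∞ × ℝ≥0∞}
    (hd : d ∈ I) : ∃ m ∈ PF I, sqle m d := by
  set S : Set (ℝ≥0∞ × ℝ≥0∞) := {y ∈ I | sqle y d} with hS
  have hSfin : S.Finite := hI.subset (fun x hx => hx.1)
  have hdS : d ∈ S := ⟨hd, sqle_refl d⟩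
  -- take a minimal element of the image of S under emb
  obtain ⟨me, hmeS, hmin⟩ := Finset.exists_minimal (s := (hSfin.image emb).toFinset)
    ⟨emb d, by rw [Set.Finite.mem_toFinset]; exact ⟨d, hdS, rfl⟩⟩
  rw [Set.Finite.mem_toFinset, Set.mem_image] at hmeS
  obtain ⟨m, hmS, rfl⟩ := hmeS
  refine ⟨m, ⟨hmS.1, ?_⟩, hmS.2⟩
  intro x hx hxm
  have hxS : x ∈ S := ⟨hx, sqle_trans hxm.1 hmS.2⟩
  have : ¬ emb x < emb m := fun hlt => lt_irrefl _ (lt_of_lt_of_le hlt (hmin (by show emb x ∈ _; rw [Set.Finite.mem_toFinset]; exact ⟨x, hxS, rfl⟩) hlt.le))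
  exact this (lt_of_le_of_ne (emb_le.2 hxm.1) (fun h => hxm.2 (emb_inj h)))

/-- If `J ⊆ I` and every element of `I` is dominated by an element of `J`,
then `PF I = PF J`. -/
lemma pf_eq_of_dom {I J : Set (ℝ≥0∞ × ℝ≥0∞)} (hJI : J ⊆ I)
    (hdom : ∀ x ∈ I, ∃ y ∈ J, sqle y x) : PF I = PF J := by
  ext d
  constructor
  · rintro ⟨hdI, hmin⟩
    obtain ⟨y, hyJ, hyd⟩ := hdom d hdI
    have hyd' : y = d := by
      by_contra hne
      exact hmin y (hJI hyJ) ⟨hyd, hne⟩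
    refine ⟨hyd' ▸ hyJ, fun x hx => hmin x (hJI hx)⟩
  · rintro ⟨hdJ, hmin⟩
    refine ⟨hJI hdJ, fun x hx hxd => ?_⟩
    obtain ⟨y, hyJ, hyx⟩ := hdom x hx
    have hyd : sqle y d := sqle_trans hyx hxd.1
    by_cases hy : y = d
    · subst hy
      exact hxd.2 (sqle_antisymm hxd.1 hyx)
    · exact hmin y hyJ ⟨hyd, hy⟩

/-- `PF(Ψ_A(I₁,I₂,c)) = PF(Ψ_A(PF(I₁),I₂,c)) = PF(Ψ_A(I₁,PF(I₂),c))`. -/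
theorem pf_psiA_pf (I₁ I₂ : Set (ℝ≥0∞ × ℝ≥0∞)) (hI₁ : I₁.Finite) (hI₂ : I₂.Finite)
    (hI₁D : I₁ ⊆ Dom) (hI₂D : I₂ ⊆ Dom) (c : ℝ≥0∞) :
    PF (PsiA I₁ I₂ c) = PF (PsiA (PF I₁) I₂ c) ∧
      PF (PsiA I₁ I₂ c) = PF (PsiA I₁ (PF I₂) c) := by
  constructor
  · apply pf_eq_of_dom
    · rintro x (hx | hx)
      · exact Or.inl hx.1
      · exact Or.inr hx
    · rintro x (hx | hx)
      · obtain ⟨y, hy, hyx⟩ := exists_pf_dom hI₁ hx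
        exact ⟨y, Or.inl hy, hyx⟩
      · exact ⟨x, Or.inr hx, sqle_refl x⟩
  · apply pf_eq_of_dom
    · rintro x (hx | ⟨d₂, hd₂, rfl⟩)
      · exact Or.inl hx
      · exact Or.inr ⟨d₂, hd₂.1, rfl⟩
    · rintro x (hx | ⟨d₂, hd₂, rfl⟩)
      · exact ⟨x, Or.inl hx, sqle_refl x⟩
      · obtain ⟨y, hy, hy2⟩ := exists_pf_dom hI₂ hd₂
        exact ⟨(y.1, y.2 + c), Or.inr ⟨y, hy, rfl⟩, hy2.1, add_le_add_left hy2.2 c⟩
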